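/- In a CA-AG-groupoid S (a magma satisfying the left invertive law and cyclic associativity), the set of idempotent elements forms a semilattice: for all a,b in S with a·a = a and b·b = b, one has a·b = b·a and (a·b)·(a·b) = a·b. -/
import Mathlib


theorem CA_AG_groupoid_idempotents_semilattice {S : Type*} [Mul S]
    (li : ∀ a b c : S, (a * b) * c = (c * b) * a)
    (ca : ∀ a b c : S, a * (b * c) = c * (a * b)) :
    ∀ a b : S, a * a = a → b * b = b →
      a * b = b * a ∧ (a * b) * (a * b) = a * b := by
  intro a b ha hb
  have v_au : b * a = a * (a * b) := by
    calc b * a = b * (a * a) := by rw [ha]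
      _ = a * (b * a) := ca b a a
      _ = a * (a * b) := ca a b a
  have u_bv : a * b = b * (b * a) := by
    calc a * b = a * (b * b) := by rw [hb]
      _ = b * (a * b) := ca a b b
      _ = b * (b * a) := ca b a b
  have huv : a * b = (a * b) * (b * a) := by
    calc a * b = b * (b * a) := u_bv
      _ = b * (a * (a * b)) := by rw [← v_au]
      _ = (a * b) * (b * a) := ca b a (a * b)
  have hvu : b * a = (b * a) * (a * b) := by
    calc b * a = a * (a * b) := v_au
      _ = a * (b * (b * a)) := by rw [← u_bv]
      _ = (b * a) * (a * b) := ca a b (b * a)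
  have h1 : a * b = (b * a) * a := by
    calc a * b = (a * a) * b := by rw [ha]
      _ = (b * a) * a := li a a b
  have h2 : b * a = (a * b) * b := by
    calc b * a = (b * b) * a := by rw [hb]
      _ = (a * b) * b := li b b a
  have hu2 : (a * b) * (a * b) = a * b := by
    calc (a * b) * (a * b) = ((a * b) * b) * a := (li (a * b) b a).symm
      _ = (b * a) * a := by rw [← h2]
      _ = a * b := h1.symm
  have comm : a * b = b * a := by
    have huvv : (a * b) * (b * a) = b * a := by
      calc (a * b) * (b * a) = ((a * b) * (a * b)) * (b * a) := by rw [hu2]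
        _ = ((b * a) * (a * b)) * (a * b) := li (a * b) (a * b) (b * a)
        _ = b * a := by rw [← hvu, ← hvu]
    calc a * b = (a * b) * (b * a) := huv
      _ = b * a := huvv
  exact ⟨comm, hu2⟩
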